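/- Let z, w ∈ 𝕊 and suppose z has infinite order in the group 𝕊. Let V be a neighborhood of 1 in 𝕊. If w^l = 1 for every l ∈ ℕ such that z^l ∈ V, then w = 1. -/

import Mathlib

open Filter Topology

noncomputable section

lemma myexp_zsmul (n : ℤ) (t : ℝ) : Circle.exp (n • t) = Circle.exp t ^ n := by
  have := map_zsmul Circle.expHom n t
  simpa [Circle.expHom, ← ofMul_zpow] using this

/-- Powers of an infinite-order element cluster at every point of the circle. -/
lemma dense_pows (g : Circle) (hg : ∀ n : ℕ, 0 < n → g ^ n ≠ 1) (x : Circle) :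
    MapClusterPt x atTop (g ^ · : ℕ → Circle) := by
  rw [mapClusterPt_atTop_pow_iff_mem_topologicalClosure_zpowers]
  set H := (Subgroup.zpowers g).topologicalClosure with hH
  suffices htop : H = ⊤ by rw [htop]; trivial
  have hgH : g ∈ H := Subgroup.le_topologicalClosure _ (Subgroup.mem_zpowers g)
  set S : AddSubgroup ℝ :=
    { carrier := {t | Circle.exp t ∈ H}
      zero_mem' := by simpa using one_mem H
      add_mem' := fun hx hy => by
        simpa [Circle.exp_add] using mul_mem hx hy
      neg_mem' := fun {x} hx => by
        have : Circle.exp x ∈ H := hx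
        simpa [Circle.exp_neg] using inv_mem this } with hS
  rcases AddSubgroup.dense_or_cyclic S with hd | ⟨a, ha⟩
  · -- dense case : H = ⊤
    ext x
    simp only [Subgroup.mem_top, iff_true]
    have h1 : x = Circle.exp (Complex.arg (x:ℂ)) := (Circle.exp_arg x).symm
    have h2 : Complex.arg (x:ℂ) ∈ closure (S : Set ℝ) := hd _
    have h3 : Circle.exp (Complex.arg (x:ℂ)) ∈ closure (Circle.exp '' (S : Set ℝ)) :=
      image_closure_subset_closure_image Circle.exp.continuous ⟨_, h2, rfl⟩
    have h4 : Circle.exp '' (S : Set ℝ) ⊆ (H : Set Circle) := by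
      rintro _ ⟨t, ht, rfl⟩; exact ht
    have h5 : closure (Circle.exp '' (S : Set ℝ)) ⊆ (H : Set Circle) :=
      closure_minimal h4 (Subgroup.isClosed_topologicalClosure _)
    rw [h1]; exact h5 h3
  · -- cyclic case : contradiction with infinite order
    exfalso
    have h2pi : (2 * Real.pi) ∈ S := by
      show Circle.exp (2 * Real.pi) ∈ H
      rw [Circle.exp_two_pi]; exact one_mem H
    have hargS : Complex.arg (g:ℂ) ∈ S := by
      show Circle.exp (Complex.arg (g:ℂ)) ∈ H
      rw [Circle.exp_arg]; exact hgH
    rw [ha, AddSubgroup.mem_closure_singleton] at h2pi hargS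
    obtain ⟨k, hk⟩ := h2pi
    obtain ⟨j, hj⟩ := hargS
    have hk0 : k ≠ 0 := by
      rintro rfl
      simp only [zero_smul] at hk
      have : (0:ℝ) < 2 * Real.pi := by positivity
      linarith [hk]
    have hgk : g ^ k = 1 := by
      have : g = Circle.exp (j • a) := by rw [hj, Circle.exp_arg]
      rw [this, ← myexp_zsmul, smul_smul, mul_comm, ← smul_smul, hk,
        myexp_zsmul, Circle.exp_two_pi, one_zpow]
    have : g ^ (k.natAbs) = 1 := by
      have := hgk
      rcases Int.natAbs_eq k with he | he
      · rw [he] at this; exact_mod_cast by rwa [zpow_natCast] at this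
      · rw [he, zpow_neg, zpow_natCast, inv_eq_one] at this; exact this
    exact hg k.natAbs (Int.natAbs_pos.mpr hk0) this

/-- If `z ∈ 𝕊` has infinite order, `V` is a neighborhood of `1` in `𝕊`, and `w^l = 1`
for every `l ∈ ℕ` (`l ≥ 1`) with `z^l ∈ V`, then `w = 1`. -/
theorem lemma_F0_Mackey (z w : Circle) (hz : ∀ n : ℕ, 0 < n → z ^ n ≠ 1)
    (V : Set Circle) (hV : V ∈ 𝓝 (1 : Circle))
    (h : ∀ l : ℕ, 0 < l → z ^ l ∈ V → w ^ l = 1) : w = 1 := by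
  -- step 1: there is some positive l with z^l ∈ V, hence w has finite order
  have h1 : MapClusterPt (1 : Circle) atTop (z ^ · : ℕ → Circle) :=
    mapClusterPt_one_atTop_pow z
  obtain ⟨n, hn1, hnV⟩ := ((mapClusterPt_iff_frequently.mp h1 V hV).and_eventually
    (eventually_ge_atTop 1)).exists
  have hwfin : IsOfFinOrder w :=
    isOfFinOrder_iff_pow_eq_one.mpr ⟨n, hnV, h n hnV hn1⟩
  set m := orderOf w with hm
  have hm0 : 0 < m := hwfin.orderOf_pos
  -- step 2: find l ≡ 1 mod m with z^l ∈ V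
  have hzm : ∀ n : ℕ, 0 < n → (z ^ m) ^ n ≠ 1 := by
    intro n hn
    rw [← pow_mul]
    exact hz (m * n) (Nat.mul_pos hm0 hn)
  have h2 : MapClusterPt (z⁻¹ : Circle) atTop ((z ^ m) ^ · : ℕ → Circle) :=
    dense_pows (z ^ m) hzm z⁻¹
  have hU : {x : Circle | z * x ∈ V} ∈ 𝓝 (z⁻¹ : Circle) := by
    have hc : Continuous fun x : Circle => z * x := by continuity
    exact hc.continuousAt.preimage_mem_nhds (by rw [mul_inv_cancel]; exact hV)
  obtain ⟨q, hq1, hq2⟩ := ((mapClusterPt_iff_frequently.mp h2 _ hU).and_eventually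
    (eventually_ge_atTop 1)).exists
  have hl : z ^ (m * q + 1) ∈ V := by
    have he : z * (z ^ m) ^ q = z ^ (m * q + 1) := by
      rw [← pow_mul, pow_succ, mul_comm]
    have := hq1
    simp only [Set.mem_setOf_eq] at this
    rwa [he] at this
  have hw : w ^ (m * q + 1) = 1 := h _ (Nat.succ_pos _) hl
  have hdvd : m ∣ m * q + 1 := orderOf_dvd_of_pow_eq_one hw
  have : m ∣ 1 := (Nat.dvd_add_right ⟨q, rfl⟩).mp hdvd
  have hm1 : m = 1 := Nat.dvd_one.mp this
  exact orderOf_eq_one_iff.mp hm1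

end
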